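/- The quotient space (List Bool × Bool × [0,1])/∼₁, equipped with the quotient topology, is homeomorphic to the half-line [0,∞); moreover the depth function (w,d,α) ↦ |w| + α descends to such a homeomorphism. (This is the paper's assertion that gluing, at every vertex v of the infinite rooted binary tree, the leftmost descending ray [v, vLLL…) to the rightmost descending ray [v, vRRR…) by the depth-preserving map collapses the entire tree to a copy of [0,∞).) -/

import Mathlib

/-!
STATEMENT 0: The quotient of the infinite rooted binary tree obtained by gluing, at
every vertex `v`, the leftmost descending ray `[v, vLLL…)` to the rightmost descending
ray `[v, vRRR…)` by the depth-preserving map is homeomorphic to `[0,∞)`, and the depth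
function `(w,d,α) ↦ |w| + α` descends to such a homeomorphism.
-/

open unitInterval

/-- The words in letters `L = false`, `R = true` are given the discrete topology. -/
instance : TopologicalSpace (List Bool) := ⊥

/-- The generating relation of the infinite rooted binary tree: `(w,d,0) ∼ (w,d',0)`
and `(w,d,1) ∼ (w ++ [d], d', 0)`. -/
inductive TreeRel : (List Bool × Bool × I) → (List Bool × Bool × I) → Prop
  | vertex (w : List Bool) (d d' : Bool) : TreeRel (w, d, 0) (w, d', 0)
  | edge (w : List Bool) (d d' : Bool) : TreeRel (w, d, 1) (w ++ [d], d', 0)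

/-- The depth-preserving gluing of the two extreme descending rays at each vertex:
`(w ++ L^j, L, α) ∼ (w ++ R^j, R, α)`. -/
inductive Glue1 : (List Bool × Bool × I) → (List Bool × Bool × I) → Prop
  | mk (w : List Bool) (j : ℕ) (α : I) :
      Glue1 (w ++ List.replicate j false, false, α) (w ++ List.replicate j true, true, α)

/-- The relation `∼₁`. -/
def Rel1 (a b : List Bool × Bool × I) : Prop := TreeRel a b ∨ Glue1 a b

namespace Statement0Aux

instance : DiscreteTopology (List Bool) := ⟨rfl⟩

/-- The depth function. -/
noncomputable def f (p : List Bool × Bool × I) : ℝ := (p.1.length : ℝ) + (p.2.2 : ℝ)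

lemma f_nonneg (p : List Bool × Bool × I) : 0 ≤ f p := by
  have h1 : (0:ℝ) ≤ (p.1.length : ℝ) := by positivity
  have h2 : (0:ℝ) ≤ (p.2.2 : ℝ) := p.2.2.2.1
  unfold f; linarith

lemma f_cont : Continuous f := by
  apply Continuous.add
  · exact (continuous_of_discreteTopology (f := fun l : List Bool => (l.length : ℝ))).comp
      continuous_fst
  · exact continuous_subtype_val.comp (continuous_snd.comp continuous_snd)

/-- The depth function respects `∼₁`. -/
lemma f_respects : ∀ a b, Rel1 a b → f a = f b := by
  rintro a b (h | h)
  · cases h with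
    | vertex w d d' => rfl
    | edge w d d' =>
      show (w.length : ℝ) + ((1:I):ℝ) = ((w ++ [d]).length : ℝ) + ((0:I):ℝ)
      have h1 : ((1:I):ℝ) = 1 := rfl
      have h0 : ((0:I):ℝ) = 0 := rfl
      rw [h1, h0, List.length_append, List.length_singleton]
      push_cast
      ring
  · cases h with
    | mk w j α => simp [f]

/-- The induced map on the quotient, into `[0,∞)`. -/
noncomputable def q (x : Quot Rel1) : Set.Ici (0:ℝ) :=
  Quot.lift (fun p => (⟨f p, f_nonneg p⟩ : Set.Ici (0:ℝ)))
    (fun a b h => Subtype.ext (f_respects a b h)) x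

lemma q_cont : Continuous q :=
  continuous_quot_lift _ (f_cont.subtype_mk _)

lemma q_mk (p : List Bool × Bool × I) : (q (Quot.mk Rel1 p) : ℝ) = f p := rfl

/-- Basic gluing equality in the quotient. -/
lemma glue_eq (w : List Bool) (j : ℕ) (α : I) :
    Quot.mk Rel1 (w ++ List.replicate j false, false, α) =
      Quot.mk Rel1 (w ++ List.replicate j true, true, α) :=
  Quot.sound (Or.inr (Glue1.mk w j α))

lemma d_eq (w : List Bool) (α : I) :
    Quot.mk Rel1 (w, false, α) = Quot.mk Rel1 (w, true, α) := by
  have := glue_eq w 0 α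
  simpa using this

lemma edge_eq (n : ℕ) :
    Quot.mk Rel1 (List.replicate n false, false, 1) =
      Quot.mk Rel1 (List.replicate (n+1) false, false, 0) := by
  have h := Quot.sound (r := Rel1)
    (Or.inl (TreeRel.edge (List.replicate n false) false false))
  rwa [← List.replicate_succ'] at h

/-- Every word can be normalised to an all-`false` word of the same length. -/
lemma norm_aux (w : List Bool) : ∀ (k : ℕ) (α : I),
    Quot.mk Rel1 (w ++ List.replicate k false, false, α) =
      Quot.mk Rel1 (List.replicate (w.length + k) false, false, α) := by
  induction w using List.reverseRecOn with
  | nil => intro k α; simp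
  | append_singleton u b ih =>
    intro k α
    cases b with
    | false =>
      have hl : u ++ [false] ++ List.replicate k false = u ++ List.replicate (k+1) false := by
        simp [List.replicate_succ]
      rw [hl, ih (k+1)]
      have : u.length + (k+1) = (u ++ [false]).length + k := by simp; omega
      rw [this]
    | true =>
      have h1 : Quot.mk Rel1 (u ++ [true] ++ List.replicate k false, false, α)
          = Quot.mk Rel1 (u ++ [true] ++ List.replicate k true, true, α) :=
        glue_eq (u ++ [true]) k α
      have h2 : u ++ [true] ++ List.replicate k true = u ++ List.replicate (k+1) true := by
        simp [List.replicate_succ]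
      have h3 : Quot.mk Rel1 (u ++ List.replicate (k+1) true, true, α)
          = Quot.mk Rel1 (u ++ List.replicate (k+1) false, false, α) :=
        (glue_eq u (k+1) α).symm
      rw [h1, h2, h3, ih (k+1)]
      have : u.length + (k+1) = (u ++ [true]).length + k := by simp; omega
      rw [this]

lemma norm (w : List Bool) (d : Bool) (α : I) :
    Quot.mk Rel1 (w, d, α) = Quot.mk Rel1 (List.replicate w.length false, false, α) := by
  have hd : Quot.mk Rel1 (w, d, α) = Quot.mk Rel1 (w, false, α) := by
    cases d
    · rfl
    · exact (d_eq w α).symm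
  have h := norm_aux w 0 α
  simp only [List.replicate_zero, List.append_nil, Nat.add_zero] at h
  exact hd.trans h

lemma mk_eq_of_depth_le (n m : ℕ) (α β : I) (hnm : n ≤ m)
    (h : (n:ℝ) + (α:ℝ) = (m:ℝ) + (β:ℝ)) :
    Quot.mk Rel1 (List.replicate n false, false, α) =
      Quot.mk Rel1 (List.replicate m false, false, β) := by
  have hα0 : (0:ℝ) ≤ (α:ℝ) := α.2.1
  have hα1 : (α:ℝ) ≤ 1 := α.2.2
  have hβ0 : (0:ℝ) ≤ (β:ℝ) := β.2.1
  have hβ1 : (β:ℝ) ≤ 1 := β.2.2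
  have hm1 : (m:ℝ) ≤ (n:ℝ) + 1 := by linarith
  have hm1' : m ≤ n + 1 := by exact_mod_cast hm1
  have hcase : m = n ∨ m = n + 1 := by omega
  rcases hcase with rfl | rfl
  · have : (α:ℝ) = (β:ℝ) := by linarith
    have : α = β := Subtype.ext this
    rw [this]
  · have hA : (α:ℝ) = 1 := by push_cast at h; linarith
    have hB : (β:ℝ) = 0 := by push_cast at h; linarith
    have hA' : α = 1 := Subtype.ext (by simpa using hA)
    have hB' : β = 0 := Subtype.ext (by simpa using hB)
    rw [hA', hB']
    exact edge_eq n

lemma mk_eq_of_depth_eq (n m : ℕ) (α β : I)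
    (h : (n:ℝ) + (α:ℝ) = (m:ℝ) + (β:ℝ)) :
    Quot.mk Rel1 (List.replicate n false, false, α) =
      Quot.mk Rel1 (List.replicate m false, false, β) := by
  rcases le_total n m with hnm | hmn
  · exact mk_eq_of_depth_le n m α β hnm h
  · exact (mk_eq_of_depth_le m n β α hmn h.symm).symm

lemma q_injective : Function.Injective q := by
  intro a b
  refine Quot.induction_on a (fun p => ?_)
  refine Quot.induction_on b (fun p' hpp' => ?_)
  obtain ⟨w, d, α⟩ := p
  obtain ⟨w', d', α'⟩ := p'
  have h : (w.length : ℝ) + (α:ℝ) = (w'.length : ℝ) + (α':ℝ) := by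
    have := congrArg (Subtype.val) hpp'
    simpa [q, f] using this
  rw [norm w d α, norm w' d' α']
  exact mk_eq_of_depth_eq _ _ _ _ h

/-- The fractional part of `r ≥ 0` lies in `[0,1]`. -/
lemma fract_mem (r : Set.Ici (0:ℝ)) :
    (r:ℝ) - (⌊(r:ℝ)⌋₊ : ℝ) ∈ Set.Icc (0:ℝ) 1 := by
  constructor
  · have := Nat.floor_le (Set.mem_Ici.mp r.2)
    linarith
  · have := Nat.lt_floor_add_one (r:ℝ)
    linarith

/-- The candidate inverse map. -/
noncomputable def g (r : Set.Ici (0:ℝ)) : Quot Rel1 :=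
  Quot.mk Rel1 (List.replicate ⌊(r:ℝ)⌋₊ false, false, ⟨(r:ℝ) - (⌊(r:ℝ)⌋₊ : ℝ), fract_mem r⟩)

lemma q_g (r : Set.Ici (0:ℝ)) : q (g r) = r := by
  apply Subtype.ext
  show f _ = (r:ℝ)
  simp [f]

lemma g_q (x : Quot Rel1) : g (q x) = x :=
  q_injective (by rw [q_g])

/-- Continuity on a union of two closed sets. -/
lemma continuousOn_union_closed {X Y : Type*} [TopologicalSpace X] [TopologicalSpace Y]
    {s t : Set X} {φ : X → Y} (hs : IsClosed s) (ht : IsClosed t)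
    (hφs : ContinuousOn φ s) (hφt : ContinuousOn φ t) : ContinuousOn φ (s ∪ t) := by
  intro x hx
  rw [ContinuousWithinAt, nhdsWithin_union]
  have aux : ∀ (u : Set X), IsClosed u → ContinuousOn φ u →
      Filter.Tendsto φ (nhdsWithin x u) (nhds (φ x)) := by
    intro u hu hφu
    by_cases hxu : x ∈ u
    · exact hφu x hxu
    · have : nhdsWithin x u = ⊥ := by
        rw [← notMem_closure_iff_nhdsWithin_eq_bot]
        rwa [hu.closure_eq]
      rw [this]
      exact Filter.tendsto_bot
  rw [Filter.tendsto_sup]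
  exact ⟨aux s hs hφs, aux t ht hφt⟩

/-- The single-interval formula. -/
noncomputable def h (n : ℕ) (r : Set.Ici (0:ℝ)) : Quot Rel1 :=
  Quot.mk Rel1 (List.replicate n false, false,
    Set.projIcc (0:ℝ) 1 zero_le_one ((r:ℝ) - n))

lemma h_cont (n : ℕ) : Continuous (h n) := by
  apply Continuous.comp continuous_quot_mk
  apply Continuous.prodMk continuous_const
  apply Continuous.prodMk continuous_const
  exact (continuous_projIcc).comp (continuous_subtype_val.sub continuous_const)

/-- The piece of the domain where `h n` agrees with `g`. -/
def A (n : ℕ) : Set (Set.Ici (0:ℝ)) := Subtype.val ⁻¹' Set.Icc (n:ℝ) (n+1)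

lemma A_closed (n : ℕ) : IsClosed (A n) := isClosed_Icc.preimage continuous_subtype_val

lemma g_eq (r : Set.Ici (0:ℝ)) (n : ℕ) (hfl : ⌊(r:ℝ)⌋₊ = n) (α : I)
    (hα : (α:ℝ) = (r:ℝ) - (n:ℝ)) :
    g r = Quot.mk Rel1 (List.replicate n false, false, α) := by
  subst hfl
  unfold g
  congr 1
  exact Prod.ext rfl (Prod.ext rfl (Subtype.ext hα.symm))

lemma g_eq_h_on (n : ℕ) : Set.EqOn g (h n) (A n) := by
  intro r hr
  obtain ⟨h1, h2⟩ := hr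
  have hr0 : (0:ℝ) ≤ (r:ℝ) := r.2
  rcases lt_or_eq_of_le h2 with h2 | h2
  · -- r < n + 1, so ⌊r⌋ = n and the fractional part is r - n ∈ [0,1)
    have hfl : ⌊(r:ℝ)⌋₊ = n := by
      rw [Nat.floor_eq_iff (le_trans (by positivity) h1)]
      exact ⟨h1, by exact_mod_cast h2⟩
    have hmem : (r:ℝ) - (n:ℝ) ∈ Set.Icc (0:ℝ) 1 := ⟨by linarith, by linarith⟩
    rw [g_eq r n hfl ⟨(r:ℝ) - (n:ℝ), hmem⟩ rfl]
    unfold h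
    rw [Set.projIcc_of_mem zero_le_one hmem]
  · -- r = n + 1 : the two formulas differ by the edge relation
    have hr' : (r:ℝ) = ((n+1 : ℕ) : ℝ) := by push_cast; linarith
    have hfl : ⌊(r:ℝ)⌋₊ = n + 1 := by rw [hr', Nat.floor_natCast]
    have hg : g r = Quot.mk Rel1 (List.replicate (n+1) false, false, 0) := by
      apply g_eq r (n+1) hfl
      show (0:ℝ) = (r:ℝ) - ((n+1:ℕ):ℝ)
      rw [hr']
      ring
    have hmem : (r:ℝ) - (n:ℝ) ∈ Set.Icc (0:ℝ) 1 := by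
      rw [hr']
      push_cast
      constructor <;> linarith
    have hh : h n r = Quot.mk Rel1 (List.replicate n false, false, 1) := by
      unfold h
      rw [Set.projIcc_of_mem zero_le_one hmem]
      congr 1
      refine Prod.ext rfl (Prod.ext rfl (Subtype.ext ?_))
      show (r:ℝ) - (n:ℝ) = ((1:I):ℝ)
      have h1' : ((1:I):ℝ) = 1 := rfl
      rw [h1', hr']
      push_cast
      ring
    rw [hg, hh]
    exact (edge_eq n).symm

lemma g_contOn (n : ℕ) : ContinuousOn g (A n) :=
  ((h_cont n).continuousOn).congr (g_eq_h_on n)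

lemma mem_cover (n : ℕ) (y : Set.Ici (0:ℝ)) (h1 : (n:ℝ) - 1 < (y:ℝ)) (h2 : (y:ℝ) < n + 2) :
    y ∈ A (n-1) ∪ A n ∪ A (n+1) := by
  have hy0 : (0:ℝ) ≤ (y:ℝ) := y.2
  rcases le_total ((y:ℝ)) n with h | h
  · left; left
    cases n with
    | zero =>
      have h' : (y:ℝ) ≤ 0 := by exact_mod_cast h
      refine ⟨?_, ?_⟩
      · show ((0 - 1 : ℕ) : ℝ) ≤ (y:ℝ)
        have e0 : ((0 - 1 : ℕ) : ℝ) = 0 := by norm_num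
        rw [e0]
        linarith
      · show (y:ℝ) ≤ ((0 - 1 : ℕ) : ℝ) + 1
        have e0 : ((0 - 1 : ℕ) : ℝ) = 0 := by norm_num
        rw [e0]
        linarith
    | succ k =>
      refine ⟨?_, ?_⟩
      · show ((k+1-1 : ℕ):ℝ) ≤ (y:ℝ)
        push_cast at h1 ⊢
        linarith
      · show (y:ℝ) ≤ ((k+1-1 : ℕ):ℝ) + 1
        push_cast at h ⊢
        linarith
  · rcases le_total ((y:ℝ)) (n+1) with h' | h'
    · left; right
      exact ⟨h, h'⟩
    · right
      refine ⟨by push_cast; linarith, by push_cast; linarith⟩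

lemma g_cont : Continuous g := by
  apply continuous_of_cover_nhds (ι := Set.Ici (0:ℝ))
    (s := fun x => A (⌊(x:ℝ)⌋₊ - 1) ∪ A ⌊(x:ℝ)⌋₊ ∪ A (⌊(x:ℝ)⌋₊ + 1))
  · intro x
    have hopen : IsOpen (Subtype.val ⁻¹' Set.Ioo ((⌊(x:ℝ)⌋₊:ℝ) - 1) ((⌊(x:ℝ)⌋₊:ℝ) + 2) :
        Set (Set.Ici (0:ℝ))) := isOpen_Ioo.preimage continuous_subtype_val
    have hxmem : x ∈ Subtype.val ⁻¹' Set.Ioo ((⌊(x:ℝ)⌋₊:ℝ) - 1) ((⌊(x:ℝ)⌋₊:ℝ) + 2) :=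
      ⟨by linarith [Nat.floor_le (Set.mem_Ici.mp x.2)], by linarith [Nat.lt_floor_add_one (x:ℝ)]⟩
    exact ⟨x, Filter.mem_of_superset (hopen.mem_nhds hxmem)
      (fun y hy => mem_cover ⌊(x:ℝ)⌋₊ y hy.1 hy.2)⟩
  · intro x
    exact continuousOn_union_closed ((A_closed _).union (A_closed _)) (A_closed _)
      (continuousOn_union_closed (A_closed _) (A_closed _) (g_contOn _) (g_contOn _))
      (g_contOn _)

noncomputable def e : Quot Rel1 ≃ₜ Set.Ici (0:ℝ) where
  toFun := q
  invFun := g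
  left_inv := g_q
  right_inv := q_g
  continuous_toFun := q_cont
  continuous_invFun := g_cont

end Statement0Aux

theorem statement0 :
    ∃ e : Quot Rel1 ≃ₜ Set.Ici (0 : ℝ),
      ∀ (w : List Bool) (d : Bool) (α : I),
        (e (Quot.mk Rel1 (w, d, α)) : ℝ) = (w.length : ℝ) + (α : ℝ) := by
  exact ⟨Statement0Aux.e, fun w d α => rfl⟩
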